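/- Let p be a prime and α ≥ 1 an integer. In the group-annihilator graph Γ(ℤ/p^αℤ), the vertex 0 has degree p^α − 1, and for every 0 ≤ i ≤ α−1 and every vertex a ∈ O_{α,p^i}: the degree of a equals p^i if 2i < α, and equals p^i − 1 if 2i ≥ α. -/

import Mathlib

/-- The `a`-annihilator `[a : G] = {x ∈ ℤ : xg ∈ ℤa for all g ∈ G}` of a finite abelian
group `G` viewed as a `ℤ`-module. -/
def annSet {G : Type*} [AddCommGroup G] (a : G) : Set ℤ :=
  {x : ℤ | ∀ g : G, ∃ n : ℤ, x • g = n • a}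

/-- The group-annihilator graph `Γ(G)`: two distinct vertices `a, b` are adjacent iff
`[a : G][b : G]G = {0}`. -/
def annGraph (G : Type*) [AddCommGroup G] : SimpleGraph G where
  Adj a b := a ≠ b ∧ ∀ x ∈ annSet a, ∀ y ∈ annSet b, ∀ g : G, (x * y) • g = 0
  symm := by
    constructor
    rintro a b ⟨hne, h⟩
    refine ⟨hne.symm, fun y hy x hx g => ?_⟩
    rw [mul_comm]
    exact h x hx y hy g
  loopless := by constructor; rintro a ⟨h, -⟩; exact h rfl

/-- The `p^i`-th orbit `O_{α,p^i} = {p^i b mod p^α : b ∈ ℤ, gcd(b,p) = 1}` of `ℤ/p^αℤ`. -/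
def porbit (p α i : ℕ) : Set (ZMod (p ^ α)) :=
  {x : ZMod (p ^ α) | ∃ b : ℤ, Int.gcd b p = 1 ∧ x = (((p : ℤ) ^ i * b : ℤ) : ZMod (p ^ α))}

lemma self_mem_annSet {N : ℕ} [NeZero N] (a : ZMod N) : (a.val : ℤ) ∈ annSet a := by
  intro g
  refine ⟨(g.val : ℤ), ?_⟩
  rw [zsmul_eq_mul, zsmul_eq_mul]
  push_cast
  rw [ZMod.natCast_zmod_val, ZMod.natCast_zmod_val]
  ring

lemma annGraph_adj_iff {N : ℕ} [NeZero N] (a b : ZMod N) :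
    (annGraph (ZMod N)).Adj a b ↔ a ≠ b ∧ a * b = 0 := by
  constructor
  · rintro ⟨hne, h⟩
    refine ⟨hne, ?_⟩
    have := h _ (self_mem_annSet a) _ (self_mem_annSet b) 1
    rw [zsmul_eq_mul, mul_one] at this
    push_cast at this
    rwa [ZMod.natCast_zmod_val, ZMod.natCast_zmod_val] at this
  · rintro ⟨hne, hab⟩
    refine ⟨hne, fun x hx y hy g => ?_⟩
    obtain ⟨n, hn⟩ := hx 1
    obtain ⟨m, hm⟩ := hy 1
    rw [zsmul_eq_mul, mul_one, zsmul_eq_mul] at hn hm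
    rw [zsmul_eq_mul]
    push_cast
    rw [hn, hm]
    have h2 : (n : ZMod N) * a * ((m : ZMod N) * b) * g
        = (n : ZMod N) * (m : ZMod N) * g * (a * b) := by ring
    rw [h2, hab, mul_zero]

lemma card_zeroSet (p α i : ℕ) (hp : p.Prime) (hi : i ≤ α) :
    {c : ZMod (p ^ α) | (p : ZMod (p ^ α)) ^ i * c = 0}.ncard = p ^ i := by
  haveI : NeZero (p ^ α) := ⟨pow_ne_zero _ hp.ne_zero⟩
  have hkm : p ^ i * p ^ (α - i) = p ^ α := by rw [← pow_add, Nat.add_sub_cancel' hi]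
  have hS : {c : ZMod (p ^ α) | (p : ZMod (p ^ α)) ^ i * c = 0}
      = Set.range (fun t : Fin (p ^ i) => ((t.val * p ^ (α - i) : ℕ) : ZMod (p ^ α))) := by
    ext c
    simp only [Set.mem_setOf_eq, Set.mem_range]
    constructor
    · intro hc
      have hc' : ((p ^ i * c.val : ℕ) : ZMod (p ^ α)) = 0 := by
        push_cast
        rw [ZMod.natCast_zmod_val]
        exact hc
      rw [ZMod.natCast_eq_zero_iff] at hc'
      have hmc : p ^ (α - i) ∣ c.val := by
        refine (mul_dvd_mul_iff_left (pow_ne_zero i hp.ne_zero)).mp ?_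
        rwa [hkm]
      obtain ⟨t, ht⟩ := hmc
      have htk : t < p ^ i := by
        by_contra hle
        push_neg at hle
        have : p ^ α ≤ c.val := by
          calc p ^ α = p ^ i * p ^ (α - i) := hkm.symm
          _ ≤ t * p ^ (α - i) := Nat.mul_le_mul_right _ hle
          _ = c.val := by rw [ht, mul_comm]
        exact absurd c.val_lt (not_lt.mpr this)
      exact ⟨⟨t, htk⟩, by rw [← ZMod.natCast_zmod_val c, ht, mul_comm]⟩
    · rintro ⟨t, rfl⟩
      have : ((t.val * p ^ (α - i) * p ^ i : ℕ) : ZMod (p ^ α)) = 0 := by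
        rw [ZMod.natCast_eq_zero_iff]
        exact ⟨t.val, by rw [← hkm]; ring⟩
      push_cast at this ⊢
      calc (p : ZMod (p ^ α)) ^ i * ((t.val : ZMod (p ^ α)) * (p : ZMod (p ^ α)) ^ (α - i))
          = (t.val : ZMod (p ^ α)) * (p : ZMod (p ^ α)) ^ (α - i) * (p : ZMod (p ^ α)) ^ i := by
            ring
      _ = 0 := this
  rw [hS, ← Set.image_univ, Set.ncard_image_of_injective _ ?_, Set.ncard_univ,
    Nat.card_eq_fintype_card, Fintype.card_fin]
  intro t s hts
  simp only at hts
  have h1 : (t.val * p ^ (α - i)) < p ^ α := by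
    rw [← hkm]; exact (Nat.mul_lt_mul_right (pow_pos hp.pos _)).mpr t.isLt
  have h2 : (s.val * p ^ (α - i)) < p ^ α := by
    rw [← hkm]; exact (Nat.mul_lt_mul_right (pow_pos hp.pos _)).mpr s.isLt
  have := congrArg ZMod.val hts
  rw [ZMod.val_natCast_of_lt h1, ZMod.val_natCast_of_lt h2] at this
  exact Fin.ext (Nat.eq_of_mul_eq_mul_right (pow_pos hp.pos _) this)

/-- for a prime `p` and `α ≥ 1`, in `Γ(ℤ/p^αℤ)` the vertex `0` has degree
`p^α - 1`, and for `0 ≤ i ≤ α-1` every vertex `a ∈ O_{α,p^i}` has degree `p^i` if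
`2i < α` and degree `p^i - 1` if `2i ≥ α`. -/
theorem annGraph_degrees (p α : ℕ) (hp : p.Prime) (hα : 1 ≤ α) :
    ((annGraph (ZMod (p ^ α))).neighborSet 0).ncard = p ^ α - 1 ∧
    ∀ i, i ≤ α - 1 → ∀ a ∈ porbit p α i,
      ((annGraph (ZMod (p ^ α))).neighborSet a).ncard =
        if 2 * i < α then p ^ i else p ^ i - 1 := by
  haveI : NeZero (p ^ α) := ⟨pow_ne_zero _ hp.ne_zero⟩
  constructor
  · have h0 : (annGraph (ZMod (p ^ α))).neighborSet 0 = (Set.univ : Set (ZMod (p ^ α))) \ {0} := by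
      ext c
      simp only [SimpleGraph.mem_neighborSet, annGraph_adj_iff, Set.mem_diff,
        Set.mem_univ, Set.mem_singleton_iff, true_and, zero_mul, and_true]
      exact ⟨fun h => fun hc => h (hc.symm), fun h => fun hc => h hc.symm⟩
    rw [h0, Set.ncard_diff_singleton_of_mem (Set.mem_univ 0), Set.ncard_univ, Nat.card_zmod]
  · rintro i hi a ⟨b, hb, rfl⟩
    have hiα : i ≤ α := by omega
    set u : ZMod (p ^ α) := ((b : ℤ) : ZMod (p ^ α)) with hu_def
    have ha : (((p : ℤ) ^ i * b : ℤ) : ZMod (p ^ α)) = (p : ZMod (p ^ α)) ^ i * u := by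
      push_cast; rfl
    -- u is a unit
    have hu : IsUnit u := by
      have hcop : IsCoprime (b : ℤ) ((p : ℤ) ^ α) := by
        exact (Int.isCoprime_iff_gcd_eq_one.mpr hb).pow_right
      obtain ⟨x, y, hxy⟩ := hcop
      have : ((x * b + y * (p : ℤ) ^ α : ℤ) : ZMod (p ^ α)) = 1 := by rw [hxy]; push_cast; ring
      push_cast at this
      have hpz : ((p : ZMod (p ^ α))) ^ α = 0 := by
        have : ((p ^ α : ℕ) : ZMod (p ^ α)) = 0 := ZMod.natCast_self _
        push_cast at this; exact this
      rw [hpz, mul_zero, add_zero] at this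
      exact IsUnit.of_mul_eq_one (a := u) _ (by rw [mul_comm]; exact this)
    -- the neighbor set
    have hset : (annGraph (ZMod (p ^ α))).neighborSet ((((p : ℤ) ^ i * b : ℤ) : ZMod (p ^ α)))
        = {c : ZMod (p ^ α) | (p : ZMod (p ^ α)) ^ i * c = 0}
          \ {(((p : ℤ) ^ i * b : ℤ) : ZMod (p ^ α))} := by
      ext c
      simp only [SimpleGraph.mem_neighborSet, annGraph_adj_iff, Set.mem_diff,
        Set.mem_setOf_eq, Set.mem_singleton_iff]
      rw [ha]
      constructor
      · rintro ⟨hne, hz⟩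
        refine ⟨?_, fun hc => hne hc.symm⟩
        have : u * ((p : ZMod (p ^ α)) ^ i * c) = 0 := by rw [← hz]; ring
        exact (hu.mul_right_eq_zero).mp this
      · rintro ⟨hz, hne⟩
        refine ⟨fun hc => hne hc.symm, ?_⟩
        have : (p : ZMod (p ^ α)) ^ i * u * c = u * ((p : ZMod (p ^ α)) ^ i * c) := by ring
        rw [this, hz, mul_zero]
    rw [hset]
    by_cases h2i : 2 * i < α
    · rw [if_pos h2i]
      have hnot : (((p : ℤ) ^ i * b : ℤ) : ZMod (p ^ α))
          ∉ {c : ZMod (p ^ α) | (p : ZMod (p ^ α)) ^ i * c = 0} := by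
        intro hmem
        simp only [Set.mem_setOf_eq, ha] at hmem
        have : u * ((p : ZMod (p ^ α)) ^ (2 * i)) = 0 := by
          rw [← hmem, two_mul, pow_add]; ring
        have hp2i : ((p : ZMod (p ^ α))) ^ (2 * i) = 0 := (hu.mul_right_eq_zero).mp this
        have : ((p ^ (2 * i) : ℕ) : ZMod (p ^ α)) = 0 := by push_cast; exact hp2i
        rw [ZMod.natCast_eq_zero_iff] at this
        have := (Nat.pow_dvd_pow_iff_le_right hp.one_lt).mp this
        omega
      rw [Set.diff_singleton_eq_self hnot, card_zeroSet p α i hp hiα]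
    · rw [if_neg h2i]
      have hmem : (((p : ℤ) ^ i * b : ℤ) : ZMod (p ^ α))
          ∈ {c : ZMod (p ^ α) | (p : ZMod (p ^ α)) ^ i * c = 0} := by
        have hdvd : p ^ α ∣ p ^ (2 * i) := pow_dvd_pow p (by omega)
        have hz : ((p ^ (2 * i) : ℕ) : ZMod (p ^ α)) = 0 := by
          rw [ZMod.natCast_eq_zero_iff]; exact hdvd
        push_cast at hz
        simp only [Set.mem_setOf_eq, ha]
        have : (p : ZMod (p ^ α)) ^ i * ((p : ZMod (p ^ α)) ^ i * u)
            = (p : ZMod (p ^ α)) ^ (2 * i) * u := by rw [two_mul, pow_add]; ring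
        rw [this, hz, zero_mul]
      rw [Set.ncard_diff_singleton_of_mem hmem, card_zeroSet p α i hp hiα]
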